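/- Let M be a finite ℤ_d-module with an alternating form φ. Then the following are equivalent: (a) M is a free ℤ_d-module and φ is symplectic; (b) M admits a symplectic basis, i.e. a ℤ_d-basis (e₁,…,e_n,f₁,…,f_n) with φ(e_i,e_j) = φ(f_i,f_j) = 0 and φ(e_i,f_j) = δ_{ij} for all i,j ∈ {1,…,n}. -/

import Mathlib

open Function

section Shear
variable {R : Type} [CommRing R] {M : Type} [AddCommGroup M] [Module R M]

/-- generalized shear `x ↦ x + ψ x • w`; invertible when `1 + ψ w` is a unit. -/
noncomputable def genShear (ψ : M →ₗ[R] R) (w : M) (u : Rˣ) (hu : (1 : R) + ψ w = u) :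
    M ≃ₗ[R] M := by
  have hw : ψ w = (u : R) - 1 := by rw [← hu]; ring
  have h1 : ((u⁻¹ : Rˣ) : R) * (u : R) = 1 := u.inv_mul
  refine LinearEquiv.ofLinear (LinearMap.id + ψ.smulRight w)
    (LinearMap.id - (((u⁻¹ : Rˣ) : R) • ψ).smulRight w) ?_ ?_ <;>
  · ext x
    simp only [LinearMap.comp_apply, LinearMap.add_apply, LinearMap.sub_apply,
      LinearMap.id_apply, LinearMap.smulRight_apply, LinearMap.smul_apply,
      map_sub, map_add, map_smul, smul_eq_mul, Module.End.one_apply]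
    rw [hw]
    match_scalars
    all_goals first
      | ring1
      | linear_combination (-(ψ x)) * h1
      | linear_combination (ψ x) * h1

@[simp] lemma genShear_apply (ψ : M →ₗ[R] R) (w : M) (u : Rˣ) (hu : (1 : R) + ψ w = u)
    (x : M) : genShear ψ w u hu x = x + ψ x • w := rfl

@[simp] lemma genShear_symm_apply (ψ : M →ₗ[R] R) (w : M) (u : Rˣ) (hu : (1 : R) + ψ w = u)
    (x : M) : (genShear ψ w u hu).symm x = x - (((u⁻¹ : Rˣ) : R) * ψ x) • w := rfl

end Shear

section SR

/-- Key coprimality fact: if `u*a + v*b = 1` in `ZMod d` then some `a + k*b` is a unit. -/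
lemma zmod_key1 (d : ℕ) [NeZero d] (a b u v : ZMod d) (h : u * a + v * b = 1) :
    ∃ k : ZMod d, IsUnit (a + k * b) := by
  set x := a.val with hx
  set y := b.val with hy
  have hmod : (u.val * x + v.val * y) ≡ 1 [MOD d] := by
    have : ((u.val * x + v.val * y : ℕ) : ZMod d) = ((1 : ℕ) : ZMod d) := by
      push_cast
      rw [ZMod.natCast_rightInverse u, ZMod.natCast_rightInverse v,
        ZMod.natCast_rightInverse a, ZMod.natCast_rightInverse b]
      simpa using h
    exact (ZMod.natCast_eq_natCast_iff _ _ _).mp this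
  have hxyd : ∀ p : ℕ, p.Prime → p ∣ d → p ∣ x → p ∣ y → False := by
    intro p pp hpd hpx hpy
    have h1 : (u.val * x + v.val * y) ≡ 1 [MOD p] := hmod.of_dvd hpd
    have h2 : p ∣ u.val * x + v.val * y :=
      Dvd.dvd.add (Dvd.dvd.mul_left hpx _) (Dvd.dvd.mul_left hpy _)
    exact pp.not_dvd_one
      (Nat.modEq_zero_iff_dvd.mp ((h1.symm.trans (Nat.modEq_zero_iff_dvd.mpr h2))))
  -- the coprime trick
  set ps := d.primeFactors.filter (fun p => ¬ p ∣ x) with hps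
  set K := ps.prod id with hK
  have hcop : Nat.Coprime (x + K * y) d := by
    apply Nat.coprime_of_dvd
    intro p pp hpsum hpd
    by_cases hpx : p ∣ x
    · have hKy : p ∣ K * y := by
        have := Nat.dvd_sub hpsum hpx
        rwa [Nat.add_sub_cancel_left] at this
      rcases (Nat.Prime.dvd_mul pp).mp hKy with hK' | hy'
      · obtain ⟨q, hq, hq'⟩ := (pp.prime.dvd_finset_prod_iff id).mp hK'
        rw [hps, Finset.mem_filter, Nat.mem_primeFactors] at hq
        rw [(Nat.prime_dvd_prime_iff_eq pp hq.1.1).mp hq'] at hpx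
        exact hq.2 hpx
      · exact hxyd p pp hpd hpx hy'
    · have pps : p ∈ ps := by
        rw [hps, Finset.mem_filter, Nat.mem_primeFactors]
        exact ⟨⟨pp, hpd, NeZero.ne d⟩, hpx⟩
      have hpK : p ∣ K := Finset.dvd_prod_of_mem id pps
      have : p ∣ x := by
        have := Nat.dvd_sub hpsum (hpK.mul_right y)
        rwa [Nat.add_sub_cancel] at this
      exact hpx this
  refine ⟨(K : ZMod d), ?_⟩
  have : ((x + K * y : ℕ) : ZMod d) = a + (K : ZMod d) * b := by
    push_cast
    rw [ZMod.natCast_rightInverse a, ZMod.natCast_rightInverse b]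
  rw [← this]
  exact (ZMod.isUnit_iff_coprime _ d).mpr hcop

end SR

/-- Stable rank 1 for `ZMod d`: a unimodular row admits a unimodular combination
with first coefficient 1. -/
lemma zmod_sr (d : ℕ) [NeZero d] :
    ∀ (m : ℕ) (a β : Fin (m + 1) → ZMod d), (∑ i, β i * a i) = 1 →
      ∃ c : Fin (m + 1) → ZMod d, c 0 = 1 ∧ IsUnit (∑ i, c i * a i) := by
  haveI : IsPrincipalIdealRing (ZMod d) :=
    IsPrincipalIdealRing.of_surjective (Int.castRingHom (ZMod d)) ZMod.intCast_surjective
  intro m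
  induction m with
  | zero =>
    intro a β h
    refine ⟨fun _ => 1, rfl, ?_⟩
    rw [Fin.sum_univ_one] at h ⊢
    rw [one_mul]
    exact IsUnit.of_mul_eq_one _ ((mul_comm _ _).trans h)
  | succ m ih =>
    intro a β h
    cases m with
    | zero =>
      rw [Fin.sum_univ_two] at h
      obtain ⟨k, hk⟩ := zmod_key1 d (a 0) (a 1) (β 0) (β 1) h
      refine ⟨![1, k], rfl, ?_⟩
      rw [Fin.sum_univ_two]
      simpa using hk
    | succ m' =>
      -- merge the last two entries using principality
      obtain ⟨g, hg⟩ := (IsPrincipalIdealRing.principal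
        (Ideal.span {a ((Fin.last (m' + 1)).castSucc), a (Fin.last (m' + 2))})).principal
      rw [show Submodule.span (ZMod d) {g} = Ideal.span {g} from rfl] at hg
      have hxg : g ∣ a ((Fin.last (m' + 1)).castSucc) := by
        rw [← Ideal.mem_span_singleton, ← hg]
        exact Ideal.subset_span (by simp)
      have hyg : g ∣ a (Fin.last (m' + 2)) := by
        rw [← Ideal.mem_span_singleton, ← hg]
        exact Ideal.subset_span (by simp)
      obtain ⟨s, hs⟩ := hxg
      obtain ⟨t, ht⟩ := hyg
      have hgmem : g ∈ Ideal.span ({a ((Fin.last (m' + 1)).castSucc),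
          a (Fin.last (m' + 2))} : Set (ZMod d)) := by
        rw [hg]; exact Ideal.mem_span_singleton_self g
      obtain ⟨p, q, hpq⟩ := Ideal.mem_span_pair.mp hgmem
      have hsum : (∑ i, (Fin.snoc (fun i => β i.castSucc.castSucc)
          (β ((Fin.last (m' + 1)).castSucc) * s + β (Fin.last (m' + 2)) * t) : Fin (m' + 2) → ZMod d) i *
          (Fin.snoc (fun i => a i.castSucc.castSucc) g : Fin (m' + 2) → ZMod d) i) = 1 := by
        rw [Fin.sum_univ_castSucc]
        rw [← h, Fin.sum_univ_castSucc (n := m' + 2), Fin.sum_univ_castSucc (n := m' + 1)]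
        simp only [Fin.snoc_castSucc, Fin.snoc_last]
        rw [hs, ht]
        ring
      obtain ⟨c', hc'0, hc'u⟩ := ih _ _ hsum
      refine ⟨Fin.snoc (Fin.snoc (fun i => c' i.castSucc)
        (c' (Fin.last (m' + 1)) * p)) (c' (Fin.last (m' + 1)) * q), ?_, ?_⟩
      · have h0 : ((0 : Fin (m' + 3))) = ((0 : Fin (m' + 1)).castSucc.castSucc) := by simp
        rw [h0, Fin.snoc_castSucc, Fin.snoc_castSucc]
        simpa using hc'0
      · have heq : (∑ i, (Fin.snoc (Fin.snoc (fun i => c' i.castSucc)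
            (c' (Fin.last (m' + 1)) * p)) (c' (Fin.last (m' + 1)) * q) : Fin (m' + 3) → ZMod d) i * a i)
            = ∑ i, c' i * (Fin.snoc (fun i => a i.castSucc.castSucc) g : Fin (m' + 2) → ZMod d) i := by
          rw [Fin.sum_univ_castSucc (n := m' + 2), Fin.sum_univ_castSucc (n := m' + 1),
            Fin.sum_univ_castSucc (n := m' + 1)]
          simp only [Fin.snoc_castSucc, Fin.snoc_last]
          rw [← hpq]
          ring
        rw [heq]
        exact hc'u


section ExtBasis
variable {d : ℕ} [NeZero d] {M : Type} [AddCommGroup M] [Module (ZMod d) M]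

/-- A vector with unimodular coordinate row can be completed to a basis (as first vector). -/
lemma exists_basis_head {m : ℕ} (b : Module.Basis (Fin (m + 1)) (ZMod d) M) (f : M)
    (β : Fin (m + 1) → ZMod d) (hβ : ∑ i, β i * b.repr f i = 1) :
    ∃ B : Module.Basis (Fin (m + 1)) (ZMod d) M, B 0 = f := by
  obtain ⟨c, hc0, hcu⟩ := zmod_sr d m (fun i => b.repr f i) β hβ
  set ψ : M →ₗ[ZMod d] ZMod d := (∑ i, c i • b.coord i) - b.coord 0 with hψ
  have hψb0 : ψ (b 0) = 0 := by
    simp only [hψ, LinearMap.sub_apply, LinearMap.sum_apply, LinearMap.smul_apply,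
      Module.Basis.coord_apply, Module.Basis.repr_self, smul_eq_mul, Finsupp.single_apply]
    simp [mul_ite, Finset.sum_ite_eq, hc0]
  have hψf : ψ f = (∑ i, c i * b.repr f i) - b.repr f 0 := by
    simp [hψ, Module.Basis.coord_apply, smul_eq_mul]
  have h1 : (1 : ZMod d) + (-ψ) (b 0) = ((1 : (ZMod d)ˣ) : ZMod d) := by
    simp [hψb0]
  set e₁ := genShear (-ψ) (b 0) 1 h1 with he₁
  set b₂ := b.map e₁ with hb₂
  have hcoord : b₂.repr f 0 = ∑ i, c i * b.repr f i := by
    have : b₂.repr f = b.repr (e₁.symm f) := by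
      rw [hb₂, Module.Basis.map_repr]; rfl
    rw [this, genShear_symm_apply]
    simp only [Units.val_one, inv_one, one_mul, LinearMap.neg_apply, neg_smul, sub_neg_eq_add,
      map_add, map_smul, Module.Basis.repr_self]
    rw [hψf]
    simp [Finsupp.single_apply]
  have hu2 : IsUnit (b₂.repr f 0) := by rw [hcoord]; exact hcu
  have h2 : (1 : ZMod d) + (b₂.coord 0) (f - b₂ 0) = (hu2.unit : ZMod d) := by
    rw [map_sub, Module.Basis.coord_apply, Module.Basis.coord_apply, Module.Basis.repr_self]
    simp [IsUnit.unit_spec]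
  refine ⟨b₂.map (genShear (b₂.coord 0) (f - b₂ 0) hu2.unit h2), ?_⟩
  rw [Module.Basis.map_apply, genShear_apply]
  rw [Module.Basis.coord_apply, Module.Basis.repr_self]
  simp

end ExtBasis

section Helpers
variable {R : Type} [CommRing R] {M : Type} [AddCommGroup M] [Module R M]

lemma skew_of_alt (φ : M →ₗ[R] M →ₗ[R] R) (halt : ∀ m, φ m m = 0) (x y : M) :
    φ x y = -φ y x := by
  have h := halt (x + y)
  simp only [map_add, LinearMap.add_apply, halt x, halt y, zero_add, add_zero] at h
  exact eq_neg_of_add_eq_zero_right h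

lemma apply_eq_zero_of_basis {ι : Type} [Fintype ι] (B : Module.Basis ι R M) (ℓ : M →ₗ[R] R)
    (h : ∀ i, ℓ (B i) = 0) (y : M) : ℓ y = 0 := by
  have : ℓ = 0 := B.ext (by simpa using h)
  simp [this]

lemma succsucc_ne_one {m : ℕ} (i : Fin m) : (i.succ.succ : Fin (m + 2)) ≠ 1 := by
  intro hcontra
  rw [← Fin.succ_zero_eq_one, Fin.succ_inj] at hcontra
  exact Fin.succ_ne_zero i hcontra

end Helpers

/-- Main induction: any free finite module with symplectic alternating form
has a symplectic basis. -/
lemma main_ind (d : ℕ) [NeZero d] [Fact (1 < d)] :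
    ∀ (n : ℕ) (M : Type) [AddCommGroup M] [Module (ZMod d) M] [Finite M]
      (φ : M →ₗ[ZMod d] M →ₗ[ZMod d] ZMod d),
      (∀ m, φ m m = 0) → (∀ m₀ : M, (∀ m : M, φ m₀ m = 0) → m₀ = 0) →
      ∀ _ : Module.Basis (Fin n) (ZMod d) M,
      ∃ (k : ℕ) (B : Module.Basis (Fin k ⊕ Fin k) (ZMod d) M),
        (∀ i j, φ (B (Sum.inl i)) (B (Sum.inl j)) = 0) ∧
        (∀ i j, φ (B (Sum.inr i)) (B (Sum.inr j)) = 0) ∧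
        (∀ i j, φ (B (Sum.inl i)) (B (Sum.inr j)) = if i = j then 1 else 0) := by
  intro n
  induction n using Nat.strong_induction_on with
  | _ n ih =>
  intro M _ _ _ φ halt hnd b
  rcases n with - | n₁
  · -- n = 0 : M is trivial
    haveI : Subsingleton M := by
      refine subsingleton_of_forall_eq 0 (fun x => ?_)
      have hx := b.sum_repr x
      simpa using hx.symm
    exact ⟨0, Module.Basis.empty M, fun i => i.elim0, fun i => i.elim0, fun i => i.elim0⟩
  rcases n₁ with - | m
  · -- n = 1 : impossible
    exfalso
    have hb0 : b 0 = 0 := by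
      refine hnd (b 0) (fun y => ?_)
      have hrepr : (b.repr y 0) • b 0 = y := by simpa using b.sum_repr y
      rw [← hrepr, map_smul, smul_eq_mul, halt, mul_zero]
    exact b.ne_zero 0 hb0
  -- n = m + 2
  haveI : Finite (Module.Dual (ZMod d) M) :=
    Finite.of_injective (fun ℓ => (ℓ : M → ZMod d)) DFunLike.coe_injective
  have hinj : Injective (fun x : M => φ x) := by
    intro x y hxy
    have hz : ∀ z, φ (x - y) z = 0 := by
      intro z
      rw [map_sub, LinearMap.sub_apply, show φ x = φ y from hxy, sub_self]
    exact sub_eq_zero.mp (hnd _ hz)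
  have hsurj : Surjective (fun x : M => φ x) :=
    (Finite.injective_iff_surjective_of_equiv b.toDualEquiv.toEquiv).mp hinj
  obtain ⟨f, hf⟩ := hsurj (b.coord 0)
  have hf' : φ f = b.coord 0 := hf
  have hfb0 : φ f (b 0) = 1 := by
    rw [hf']; simp [Module.Basis.coord_apply, Module.Basis.repr_self]
  -- the coordinate row of f is unimodular
  have hrow : ∑ i, (fun i => φ (b i) (b 0)) i * b.repr f i = 1 := by
    have h1 : φ f (b 0) = ∑ i, b.repr f i * φ (b i) (b 0) := by
      conv_lhs => rw [← b.sum_repr f]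
      rw [map_sum, LinearMap.sum_apply]
      refine Finset.sum_congr rfl (fun i _ => ?_)
      rw [map_smul, LinearMap.smul_apply, smul_eq_mul]
    rw [← hfb0, h1]
    exact Finset.sum_congr rfl (fun i _ => mul_comm _ _)
  obtain ⟨B, hB0⟩ := exists_basis_head b f _ hrow
  -- the row i ↦ φ f (B i.succ) is unimodular
  have hγrow : ∑ i, (fun i : Fin (m + 1) => B.repr (b 0) i.succ) i * (fun i : Fin (m + 1) => φ f (B i.succ)) i = 1 := by
    have h1 : φ f (b 0) = ∑ j, B.repr (b 0) j * φ f (B j) := by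
      conv_lhs => rw [← B.sum_repr (b 0)]
      rw [map_sum]
      refine Finset.sum_congr rfl (fun j _ => ?_)
      rw [map_smul, smul_eq_mul]
    rw [Fin.sum_univ_succ, hB0, halt f, mul_zero, zero_add] at h1
    rw [← hfb0, h1]
  obtain ⟨c, hc0, hv⟩ := zmod_sr d m (fun i : Fin (m + 1) => φ f (B i.succ)) _ hγrow
  -- make B 1 into a hyperbolic partner for f
  set w : M := ∑ i : Fin m, c i.succ • B i.succ.succ with hw
  have hcoordw : B.coord 1 w = 0 := by
    rw [hw, map_sum]
    refine Finset.sum_eq_zero (fun i _ => ?_)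
    rw [map_smul, Module.Basis.coord_apply, Module.Basis.repr_self_apply, smul_eq_mul]
    rw [if_neg (succsucc_ne_one i), mul_zero]
  set B₂ := B.map (genShear (B.coord 1) w 1 (by rw [hcoordw]; simp)) with hB₂
  have hB₂0 : B₂ 0 = f := by
    rw [hB₂, Module.Basis.map_apply, genShear_apply, Module.Basis.coord_apply, Module.Basis.repr_self_apply]
    rw [if_neg (by exact fun h => absurd h Fin.zero_ne_one)]
    rw [zero_smul, add_zero, hB0]
  have hB₂1 : B₂ 1 = B 1 + w := by
    rw [hB₂, Module.Basis.map_apply, genShear_apply, Module.Basis.coord_apply, Module.Basis.repr_self_apply]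
    rw [if_pos rfl, one_smul]
  have hB₂ss : ∀ i : Fin m, B₂ i.succ.succ = B i.succ.succ := by
    intro i
    rw [hB₂, Module.Basis.map_apply, genShear_apply, Module.Basis.coord_apply, Module.Basis.repr_self_apply]
    rw [if_neg (succsucc_ne_one i), zero_smul, add_zero]
  have hfB₂1 : φ f (B₂ 1) = ∑ i, c i * φ f (B i.succ) := by
    rw [hB₂1, map_add, hw, map_sum, Fin.sum_univ_succ, hc0, one_mul, ← Fin.succ_zero_eq_one]
    congr 1
    refine Finset.sum_congr rfl (fun i _ => ?_)
    rw [map_smul, smul_eq_mul]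
  set U := hv.unit with hU
  set B₃ := B₂.unitsSMul (fun j => if j = 1 then U⁻¹ else 1) with hB₃
  have hB₃0 : B₃ 0 = f := by
    rw [hB₃, Module.Basis.unitsSMul_apply, if_neg (by exact fun h => absurd h Fin.zero_ne_one),
      one_smul, hB₂0]
  have hB₃1 : B₃ 1 = U⁻¹ • B₂ 1 := by
    rw [hB₃, Module.Basis.unitsSMul_apply, if_pos rfl]
  have hB₃ss : ∀ i : Fin m, B₃ i.succ.succ = B i.succ.succ := by
    intro i
    rw [hB₃, Module.Basis.unitsSMul_apply, if_neg (succsucc_ne_one i), one_smul, hB₂ss]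
  set g := B₃ 1 with hgdef
  have hfg : φ f g = 1 := by
    rw [hB₃1, Units.smul_def, map_smul, smul_eq_mul, hfB₂1]
    have : (U : ZMod d) = ∑ i, c i * φ f (B i.succ) := hv.unit_spec
    rw [← this]
    exact U.inv_mul
  have hgf : φ g f = -1 := by rw [skew_of_alt φ halt, hfg]
  -- orthogonalize the tail against f and g
  set ψb : M →ₗ[ZMod d] ZMod d := φ f - B₃.coord 1 with hψb
  have hψbf : ψb f = 0 := by
    rw [hψb, LinearMap.sub_apply, halt, ← hB₃0, Module.Basis.coord_apply, Module.Basis.repr_self_apply]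
    rw [if_neg (by exact fun h => absurd h Fin.zero_ne_one)]
    simp
  have hψbg : ψb g = 0 := by
    rw [hψb, LinearMap.sub_apply, hfg, hgdef, Module.Basis.coord_apply, Module.Basis.repr_self_apply,
      if_pos rfl, sub_self]
  set B₄ := B₃.map (genShear (-ψb) g 1 (by simp [hψbg])) with hB₄
  have hB₄apply : ∀ j, B₄ j = B₃ j - ψb (B₃ j) • g := by
    intro j
    rw [hB₄, Module.Basis.map_apply, genShear_apply, LinearMap.neg_apply, neg_smul, sub_eq_add_neg]
  have hB₄0 : B₄ 0 = f := by rw [hB₄apply, hB₃0, hψbf, zero_smul, sub_zero]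
  have hB₄1 : B₄ 1 = g := by rw [hB₄apply, ← hgdef, hψbg, zero_smul, sub_zero]
  have hB₄ss : ∀ i : Fin m, B₄ i.succ.succ = B₃ i.succ.succ - φ f (B₃ i.succ.succ) • g := by
    intro i
    rw [hB₄apply, hψb, LinearMap.sub_apply, Module.Basis.coord_apply, Module.Basis.repr_self_apply,
      if_neg (succsucc_ne_one i), sub_zero]
  have hfB₄ss : ∀ i : Fin m, φ f (B₄ i.succ.succ) = 0 := by
    intro i
    rw [hB₄ss, map_sub, map_smul, smul_eq_mul, hfg, mul_one, sub_self]
  set ψc : M →ₗ[ZMod d] ZMod d := φ g + B₄.coord 0 with hψc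
  have hψcf : ψc f = 0 := by
    rw [hψc, LinearMap.add_apply, hgf, ← hB₄0, Module.Basis.coord_apply, Module.Basis.repr_self_apply,
      if_pos rfl]
    ring
  have hψcg : ψc g = 0 := by
    rw [hψc, LinearMap.add_apply, halt, ← hB₄1, Module.Basis.coord_apply, Module.Basis.repr_self_apply,
      if_neg (by exact fun h => absurd h.symm Fin.zero_ne_one)]
    ring
  set B₅ := B₄.map (genShear ψc f 1 (by simp [hψcf])) with hB₅
  have hB₅apply : ∀ j, B₅ j = B₄ j + ψc (B₄ j) • f := by
    intro j; rw [hB₅, Module.Basis.map_apply, genShear_apply]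
  have hB₅0 : B₅ 0 = f := by rw [hB₅apply, hB₄0, hψcf, zero_smul, add_zero]
  have hB₅1 : B₅ 1 = g := by rw [hB₅apply, hB₄1, hψcg, zero_smul, add_zero]
  have hB₅ss : ∀ i : Fin m, B₅ i.succ.succ = B₄ i.succ.succ + φ g (B₄ i.succ.succ) • f := by
    intro i
    rw [hB₅apply, hψc, LinearMap.add_apply, Module.Basis.coord_apply, Module.Basis.repr_self_apply,
      if_neg (fun h => absurd h (Fin.succ_ne_zero _)), add_zero]
  have hfh : ∀ i : Fin m, φ f (B₅ i.succ.succ) = 0 := by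
    intro i
    rw [hB₅ss, map_add, map_smul, smul_eq_mul, halt, mul_zero, add_zero, hfB₄ss]
  have hgh : ∀ i : Fin m, φ g (B₅ i.succ.succ) = 0 := by
    intro i
    rw [hB₅ss, map_add, map_smul, smul_eq_mul, hgf]
    ring
  -- the orthogonal complement
  set hvec : Fin m → M := fun i => B₅ i.succ.succ with hhvec
  have hinj2 : Injective (fun i : Fin m => (i.succ.succ : Fin (m + 2))) := by
    intro i j hij
    simpa [Fin.succ_inj] using hij
  have hli : LinearIndependent (ZMod d) hvec := B₅.linearIndependent.comp _ hinj2
  set N := Submodule.span (ZMod d) (Set.range hvec) with hN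
  set bN : Module.Basis (Fin m) (ZMod d) N := Module.Basis.span hli with hbN
  set φN := LinearMap.compl₁₂ φ N.subtype N.subtype with hφN
  have hφNapply : ∀ x y : N, φN x y = φ (x : M) (y : M) := fun x y => rfl
  have hfN : ∀ x : M, x ∈ N → φ f x = 0 := by
    intro x hx
    have hle : N ≤ LinearMap.ker (φ f) := by
      rw [hN, Submodule.span_le]
      rintro - ⟨i, rfl⟩
      exact hfh i
    exact hle hx
  have hgN : ∀ x : M, x ∈ N → φ g x = 0 := by
    intro x hx
    have hle : N ≤ LinearMap.ker (φ g) := by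
      rw [hN, Submodule.span_le]
      rintro - ⟨i, rfl⟩
      exact hgh i
    exact hle hx
  have haltN : ∀ x : N, φN x x = 0 := fun x => halt (x : M)
  have hndN : ∀ x₀ : N, (∀ y : N, φN x₀ y = 0) → x₀ = 0 := by
    intro x₀ hx₀
    have hall : ∀ j, φ (x₀ : M) (B₅ j) = 0 := by
      intro j
      refine Fin.cases ?_ (fun j' => ?_) j
      · rw [hB₅0, skew_of_alt φ halt, hfN _ x₀.2, neg_zero]
      · refine Fin.cases ?_ (fun i => ?_) j'
        · rw [Fin.succ_zero_eq_one, hB₅1, skew_of_alt φ halt, hgN _ x₀.2, neg_zero]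
        · exact hx₀ ⟨hvec i, Submodule.subset_span (Set.mem_range_self i)⟩
    have : (x₀ : M) = 0 := hnd _ (apply_eq_zero_of_basis B₅ _ hall)
    exact Subtype.ext this
  obtain ⟨k, C, hC1, hC2, hC3⟩ := ih m (by omega) N φN haltN hndN bN
  -- assemble the final basis
  set v : Fin (k + 1) ⊕ Fin (k + 1) → M :=
    Sum.elim (Fin.cases f (fun i => (C (Sum.inl i) : M)))
      (Fin.cases g (fun i => (C (Sum.inr i) : M))) with hvdef
  have hvinl0 : v (Sum.inl 0) = f := rfl
  have hvinr0 : v (Sum.inr 0) = g := rfl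
  have hvinls : ∀ i : Fin k, v (Sum.inl i.succ) = (C (Sum.inl i) : M) := fun i => by
    simp [hvdef]
  have hvinrs : ∀ i : Fin k, v (Sum.inr i.succ) = (C (Sum.inr i) : M) := fun i => by
    simp [hvdef]
  have hCN : ∀ idx, (C idx : M) ∈ N := fun idx => (C idx).2
  -- linear independence
  have hliv : LinearIndependent (ZMod d) v := by
    rw [Fintype.linearIndependent_iff]
    intro t ht
    rw [Fintype.sum_sum_type, Fin.sum_univ_succ, Fin.sum_univ_succ] at ht
    simp only [hvinl0, hvinr0, hvinls, hvinrs] at ht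
    set SN : M := (∑ i : Fin k, t (Sum.inl i.succ) • (C (Sum.inl i) : M)) +
      ∑ i : Fin k, t (Sum.inr i.succ) • (C (Sum.inr i) : M) with hSN
    have hSNmem : SN ∈ N := by
      refine Submodule.add_mem _ ?_ ?_ <;>
        exact Submodule.sum_mem _ (fun i _ => Submodule.smul_mem _ _ (hCN _))
    have ht' : t (Sum.inl 0) • f + t (Sum.inr 0) • g + SN = 0 := by
      rw [hSN, ← ht]; abel
    have htl0 : t (Sum.inl 0) = 0 := by
      have happ := congrArg (φ g) ht'
      rw [map_add, map_add, map_smul, map_smul, map_zero, hgf, halt,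
        hgN _ hSNmem, smul_eq_mul, smul_eq_mul] at happ
      simpa using happ
    have htr0 : t (Sum.inr 0) = 0 := by
      have happ := congrArg (φ f) ht'
      rw [map_add, map_add, map_smul, map_smul, map_zero, hfg, halt,
        hfN _ hSNmem, smul_eq_mul, smul_eq_mul] at happ
      simpa using happ
    have hSN0 : SN = 0 := by
      rw [htl0, htr0, zero_smul, zero_smul, zero_add, zero_add] at ht'
      exact ht'
    have hσ : (∑ i : Fin k, t (Sum.inl i.succ) • C (Sum.inl i)) +
        (∑ i : Fin k, t (Sum.inr i.succ) • C (Sum.inr i)) = (0 : N) := by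
      apply Subtype.ext
      push_cast
      rw [← hSN] at *
      exact hSN0
    have hcoef := Fintype.linearIndependent_iff.mp C.linearIndependent
      (Sum.elim (fun i => t (Sum.inl i.succ)) (fun i => t (Sum.inr i.succ)))
      (by rw [Fintype.sum_sum_type]; exact hσ)
    rintro (i | i) <;> refine Fin.cases ?_ (fun i' => ?_) i
    · exact htl0
    · exact hcoef (Sum.inl i')
    · exact htr0
    · exact hcoef (Sum.inr i')
  -- spanning
  have hNle : N ≤ Submodule.span (ZMod d) (Set.range v) := by
    intro x hx
    have hexp := C.sum_repr ⟨x, hx⟩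
    have hexp' : (∑ idx, C.repr ⟨x, hx⟩ idx • (C idx : M)) = x := by
      have hcoe := congrArg (Subtype.val) hexp
      push_cast at hcoe
      exact hcoe
    rw [← hexp']
    refine Submodule.sum_mem _ (fun idx _ => Submodule.smul_mem _ _ ?_)
    rcases idx with i | i
    · exact Submodule.subset_span ⟨Sum.inl i.succ, hvinls i⟩
    · exact Submodule.subset_span ⟨Sum.inr i.succ, hvinrs i⟩
  have hspan : ⊤ ≤ Submodule.span (ZMod d) (Set.range v) := by
    rw [← B₅.span_eq, Submodule.span_le]
    rintro - ⟨j, rfl⟩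
    refine Fin.cases ?_ (fun j' => ?_) j
    · rw [hB₅0]
      exact Submodule.subset_span ⟨Sum.inl 0, rfl⟩
    · refine Fin.cases ?_ (fun i => ?_) j'
      · rw [Fin.succ_zero_eq_one, hB₅1]
        exact Submodule.subset_span ⟨Sum.inr 0, rfl⟩
      · exact hNle (Submodule.subset_span (Set.mem_range_self i))
  set Bfin : Module.Basis (Fin (k + 1) ⊕ Fin (k + 1)) (ZMod d) M := Module.Basis.mk hliv hspan with hBfin'
  have hBfin : ∀ idx, Bfin idx = v idx := fun idx => by rw [hBfin', Module.Basis.mk_apply]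
  have hCC : ∀ a b, φ (C a : M) (C b : M) = φN (C a) (C b) := fun a b => rfl
  refine ⟨k + 1, Bfin, ?_, ?_, ?_⟩
  · intro i j
    refine Fin.cases ?_ (fun i' => ?_) i <;> refine Fin.cases ?_ (fun j' => ?_) j <;>
      simp only [hBfin, hvinl0, hvinr0, hvinls, hvinrs]
    · exact halt f
    · exact hfN _ (hCN _)
    · rw [skew_of_alt φ halt, hfN _ (hCN _), neg_zero]
    · rw [hCC]; exact hC1 i' j'
  · intro i j
    refine Fin.cases ?_ (fun i' => ?_) i <;> refine Fin.cases ?_ (fun j' => ?_) j <;>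
      simp only [hBfin, hvinl0, hvinr0, hvinls, hvinrs]
    · exact halt g
    · exact hgN _ (hCN _)
    · rw [skew_of_alt φ halt, hgN _ (hCN _), neg_zero]
    · rw [hCC]; exact hC2 i' j'
  · intro i j
    refine Fin.cases ?_ (fun i' => ?_) i <;> refine Fin.cases ?_ (fun j' => ?_) j <;>
      simp only [hBfin, hvinl0, hvinr0, hvinls, hvinrs]
    · simpa using hfg
    · rw [if_neg (fun h => Fin.succ_ne_zero j' h.symm)]
      exact hfN _ (hCN _)
    · rw [if_neg (Fin.succ_ne_zero i'), skew_of_alt φ halt, hgN _ (hCN _), neg_zero]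
    · rw [hCC]
      refine (hC3 i' j').trans ?_
      simp [Fin.succ_inj]


/-- Let `M` be a finite `ℤ_d`-module with an alternating form `φ`.
Then the following are equivalent:
(a) `M` is a free `ℤ_d`-module and `φ` is symplectic;
(b) `M` admits a symplectic basis, i.e. a `ℤ_d`-basis `(e₁,…,e_n,f₁,…,f_n)` with
    `φ(e_i,e_j) = φ(f_i,f_j) = 0` and `φ(e_i,f_j) = δ_{ij}`. -/
theorem free_symplectic_iff_symplectic_basis
    (d : ℕ) [NeZero d]
    (M : Type) [AddCommGroup M] [Module (ZMod d) M] [Finite M]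
    (φ : M →ₗ[ZMod d] M →ₗ[ZMod d] ZMod d)
    (halt : ∀ m : M, φ m m = 0) :
    (Module.Free (ZMod d) M ∧ ∀ m₀ : M, (∀ m : M, φ m₀ m = 0) → m₀ = 0) ↔
      (∃ (n : ℕ) (b : Module.Basis (Fin n ⊕ Fin n) (ZMod d) M),
        (∀ i j : Fin n, φ (b (Sum.inl i)) (b (Sum.inl j)) = 0) ∧
        (∀ i j : Fin n, φ (b (Sum.inr i)) (b (Sum.inr j)) = 0) ∧
        (∀ i j : Fin n, φ (b (Sum.inl i)) (b (Sum.inr j)) = if i = j then 1 else 0)) := by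
  constructor
  · rintro ⟨hfree, hnd⟩
    rcases eq_or_ne d 1 with rfl | hd1
    · haveI : Subsingleton M := Module.subsingleton (ZMod 1) M
      exact ⟨0, Module.Basis.empty M, fun i => i.elim0, fun i => i.elim0, fun i => i.elim0⟩
    · haveI : Fact (1 < d) := ⟨by have := NeZero.ne d; omega⟩
      haveI : Module.Finite (ZMod d) M := Module.Finite.of_finite
      haveI := Module.Free.ChooseBasisIndex.fintype (ZMod d) M
      exact main_ind d _ M φ halt hnd
        ((Module.Free.chooseBasis (ZMod d) M).reindex
          (Fintype.equivFin (Module.Free.ChooseBasisIndex (ZMod d) M)))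
  · rintro ⟨n, b, h1, h2, h3⟩
    refine ⟨Module.Free.of_basis b, ?_⟩
    intro m₀ hm₀
    have key : ∀ y, φ m₀ y = ∑ idx, b.repr m₀ idx * φ (b idx) y := by
      intro y
      conv_lhs => rw [← b.sum_repr m₀]
      rw [map_sum, LinearMap.sum_apply]
      exact Finset.sum_congr rfl fun idx _ => by
        rw [map_smul, LinearMap.smul_apply, smul_eq_mul]
    have hcoord : ∀ idx, b.repr m₀ idx = 0 := by
      rintro (j | j)
      · have h := hm₀ (b (Sum.inr j))
        rw [key, Fintype.sum_sum_type] at h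
        simpa [h2, h3, mul_ite, Finset.sum_ite_eq'] using h
      · have h := hm₀ (b (Sum.inl j))
        rw [key, Fintype.sum_sum_type] at h
        have hterm : ∀ i, φ (b (Sum.inr i)) (b (Sum.inl j)) = -(if j = i then 1 else 0) := by
          intro i
          rw [skew_of_alt φ halt, h3]
        simpa [h1, hterm, mul_ite, Finset.sum_ite_eq] using h
    have hrepr0 : b.repr m₀ = 0 := by
      ext idx; exact hcoord idx
    exact b.repr.map_eq_zero_iff.mp hrepr0
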